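/- Assume γ and g satisfy (BC1') and assume (BC2). Then the transport inequalities along trajectories still hold: (a) if u : ℝ^N → ℝ is locally bounded, upper semicontinuous and satisfies Du·γ ≤ g in Ω̄^c in the viscosity sense, then u(y) ≤ ∫₀ᵗ g(X_y(s)) ds + u(X_y(t)) for every y ∉ Ω̄ and 0 < t ≤ τ_y; (b) if v : ℝ^N → ℝ is locally bounded, lower semicontinuous and satisfies Dv·γ ≥ g in Ω̄^c in the viscosity sense, then v(y) ≥ ∫₀ᵗ g(X_y(s)) ds + v(X_y(t)) for every y ∉ Ω̄ and 0 < t ≤ τ_y. Here, for y ∉ Ω̄, X_y denotes the unique solution of Ẋ_y(t) = −γ(X_y(t)), X_y(0) = y, which exists and remains in Ω̄^c on [0, τ_y) and extends continuously to t = τ_y. -/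

import Mathlib

open MeasureTheory Filter Set Metric
open scoped Topology RealInnerProductSpace

noncomputable section

/-- `ℝ^N` as a Euclidean space. -/
abbrev EN (N : ℕ) := EuclideanSpace ℝ (Fin N)


/-- An upper semicontinuous function attains its maximum on a nonempty compact set. -/
lemma usc_exists_max {α : Type*} [TopologicalSpace α] {f : α → ℝ} {K : Set α}
    (hK : IsCompact K) (hne : K.Nonempty) (hf : UpperSemicontinuous f) :
    ∃ x ∈ K, ∀ z ∈ K, f z ≤ f x := by
  have h := hK.inter_iInter_nonempty (ι := K) (fun z => {w | f z.1 ≤ f w})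
    (fun z => hf.isClosed_preimage (f z.1))
    (fun u => ?_)
  · obtain ⟨x, hxK, hx⟩ := h
    simp only [mem_iInter, mem_setOf_eq] at hx
    exact ⟨x, hxK, fun z hz => hx ⟨z, hz⟩⟩
  · rcases u.eq_empty_or_nonempty with rfl | hu
    · simpa using hne
    · obtain ⟨z, hz, hzmax⟩ := u.exists_max_image (fun w => f w.1) hu
      exact ⟨z.1, z.2, by
        simp only [mem_iInter, mem_setOf_eq]
        exact fun w hw => hzmax w hw⟩

/-- If `ψ` has a one-sided derivative `d` from the right at `a` and `a` is a local max
from the right, then `d ≤ 0`. -/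
lemma deriv_nonpos_of_right_max {ψ : ℝ → ℝ} {a d : ℝ}
    (hd : HasDerivWithinAt ψ d (Ici a) a)
    (hmax : ∀ᶠ s in 𝓝[Ici a] a, ψ s ≤ ψ a) : d ≤ 0 := by
  rw [hasDerivWithinAt_iff_tendsto_slope] at hd
  rw [Set.Ici_sdiff_left] at hd
  have hmax' : ∀ᶠ s in 𝓝[Set.Ioi a] a, slope ψ a s ≤ 0 := by
    filter_upwards [nhdsWithin_mono a Set.Ioi_subset_Ici_self hmax,
      self_mem_nhdsWithin] with s hs (hs' : s ∈ Set.Ioi a)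
    rw [slope_def_field]
    exact div_nonpos_of_nonpos_of_nonneg (by linarith) (by simp at hs'; linarith)
  exact le_of_tendsto hd hmax'

/-- Negation of a lower semicontinuous function is upper semicontinuous. -/
lemma LowerSemicontinuous.neg_usc {α : Type*} [TopologicalSpace α] {f : α → ℝ}
    (hf : LowerSemicontinuous f) : UpperSemicontinuous (fun x => -(f x)) := by
  intro x y hy
  have : -y < f x := neg_lt.1 hy
  filter_upwards [hf x _ this] with z hz
  linarith

lemma hasGradientAt_const_mul_norm_sq {F : Type*} [NormedAddCommGroup F]
    [InnerProductSpace ℝ F] [CompleteSpace F] (a : ℝ) (c : F) (x : F) :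
    HasGradientAt (fun z => a * ‖z - c‖ ^ 2) ((2 * a) • (x - c)) x := by
  have h1 : HasFDerivAt (fun z : F => ‖z - c‖ ^ 2)
      (2 • (innerSL ℝ (x - c)).comp (ContinuousLinearMap.id ℝ F)) x := by
    simpa using ((hasFDerivAt_id x).sub_const c).norm_sq
  have h2 := h1.const_mul a
  rw [hasGradientAt_iff_hasFDerivAt]
  refine h2.congr_fderiv ?_
  apply ContinuousLinearMap.ext
  intro z
  simp [InnerProductSpace.toDual_apply_apply, real_inner_smul_left, two_smul,
    ContinuousLinearMap.smul_apply, inner_add_left]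
  ring

set_option maxHeartbeats 2000000 in
/-- Core transport inequality for subsolutions, strictly before the hitting time. -/
lemma transport_core
    {N : ℕ} {Ω : Set (EN N)}
    {γ : EN N → EN N} {g : EN N → ℝ}
    (hgcont : ContinuousOn g (closure Ω)ᶜ)
    {Cg : ℝ} (hgbd : ∀ x ∈ (closure Ω)ᶜ, |g x| ≤ Cg)
    {K : ℝ} (hK : 0 ≤ K)
    (hOSL : ∀ x ∈ (closure Ω)ᶜ, ∀ y ∈ (closure Ω)ᶜ,
      -(K * ‖x - y‖ ^ 2) ≤ ⟪γ x - γ y, x - y⟫)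
    {X : EN N → ℝ → EN N} {τ : EN N → ℝ}
    (hX0 : ∀ y, X y 0 = y)
    (hXstay : ∀ y ∉ closure Ω, ∀ t, 0 ≤ t → t < τ y → X y t ∉ closure Ω)
    (hXode : ∀ y ∉ closure Ω, ∀ t, 0 ≤ t → t < τ y → HasDerivAt (X y) (-(γ (X y t))) t)
    (hXcont : ∀ y ∉ closure Ω, ContinuousOn (X y) (Set.Icc 0 (τ y)))
    {u : EN N → ℝ}
    (hub : ∀ x : EN N, ∃ C : ℝ, ∀ᶠ z in 𝓝 x, |u z| ≤ C)
    (hu : UpperSemicontinuous u)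
    (hvisc : ∀ φ : EN N → ℝ, ContDiff ℝ 2 φ → ∀ x ∉ closure Ω,
        IsLocalMax (fun z => u z - φ z) x → ⟪gradient φ x, γ x⟫ ≤ g x)
    (y : EN N) (hy : y ∉ closure Ω) (t : ℝ) (ht0 : 0 < t) (htτ : t < τ y) :
    u y ≤ (∫ s in (0:ℝ)..t, g (X y s)) + u (X y t) := by
  have hCg0 : 0 ≤ Cg := le_trans (abs_nonneg _) (hgbd y hy)
  have hτpos : 0 < τ y := ht0.trans htτ
  set t₂ : ℝ := (t + τ y) / 2 with ht₂def
  have ht₂1 : t < t₂ := by rw [ht₂def]; linarith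
  have ht₂2 : t₂ < τ y := by rw [ht₂def]; linarith
  have ht₂0 : 0 < t₂ := ht0.trans ht₂1
  -- the clamped time and curve
  set c : ℝ → ℝ := fun s => max 0 (min s t₂) with hcdef
  have hccont : Continuous c := continuous_const.max (continuous_id.min continuous_const)
  have hcmem : ∀ s, c s ∈ Set.Icc 0 (τ y) :=
    fun s => ⟨le_max_left _ _, max_le (ht0.trans htτ).le ((min_le_right _ _).trans ht₂2.le)⟩
  have hcle : ∀ s, c s ≤ t₂ := fun s => max_le ht₂0.le (min_le_right _ _)
  have hceq : ∀ s ∈ Set.Icc 0 t₂, c s = s := by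
    intro s hs
    rw [hcdef]
    simp only [min_eq_left hs.2, max_eq_right hs.1]
  set Y : ℝ → EN N := fun s => X y (c s) with hYdef
  have hYcont : Continuous Y := (hXcont y hy).comp_continuous hccont hcmem
  have hYout : ∀ s, Y s ∉ closure Ω :=
    fun s => hXstay y hy (c s) (hcmem s).1 (lt_of_le_of_lt (hcle s) ht₂2)
  have hYeq : ∀ s ∈ Set.Icc 0 t₂, Y s = X y s := by
    intro s hs; rw [hYdef]; simp only [hceq s hs]
  have hY0 : Y 0 = y := by rw [hYeq 0 ⟨le_refl 0, ht₂0.le⟩, hX0]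
  have hYt : Y t = X y t := hYeq t ⟨ht0.le, ht₂1.le⟩
  -- derivative of `Y` from the right on `[0, t]`
  have hYderiv : ∀ s ∈ Set.Icc 0 t, HasDerivWithinAt Y (-(γ (Y s))) (Set.Ici s) s := by
    intro s hs
    have hst₂ : s ∈ Set.Icc 0 t₂ := ⟨hs.1, hs.2.trans ht₂1.le⟩
    have hX := hXode y hy s hs.1 (lt_of_le_of_lt hs.2 htτ)
    have h1 : HasDerivWithinAt (X y) (-(γ (X y s))) (Set.Icc s t₂) s := hX.hasDerivWithinAt
    have h2 : HasDerivWithinAt Y (-(γ (X y s))) (Set.Icc s t₂) s :=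
      h1.congr (fun r hr => hYeq r ⟨hs.1.trans hr.1, hr.2⟩) (hYeq s hst₂)
    have h3 : Set.Icc s t₂ ∈ 𝓝[Set.Ici s] s := by
      rw [← Set.Ici_inter_Iic]
      exact inter_mem self_mem_nhdsWithin
        (mem_nhdsWithin_of_mem_nhds (Iic_mem_nhds (lt_of_le_of_lt hs.2 ht₂1)))
    rw [show γ (Y s) = γ (X y s) from by rw [hYeq s hst₂]]
    exact h2.mono_of_mem_nhdsWithin h3
  -- the integrand and antiderivative
  set G1 : ℝ → ℝ := fun s => g (Y s) with hG1def
  have hG1cont : Continuous G1 := hgcont.comp_continuous hYcont hYout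
  have hG1bd : ∀ s, |G1 s| ≤ Cg := fun s => hgbd (Y s) (hYout s)
  set I : ℝ → ℝ := fun s => ∫ r in (0:ℝ)..s, G1 r with hIdef
  have hIderiv : ∀ s, HasDerivAt I (G1 s) s := fun s =>
    intervalIntegral.integral_hasDerivAt_right (hG1cont.intervalIntegrable _ _)
      (hG1cont.stronglyMeasurableAtFilter _ _) hG1cont.continuousAt
  have hIcont : Continuous I :=
    continuous_iff_continuousAt.2 fun s => (hIderiv s).continuousAt
  have hIbd : ∀ s ∈ Set.Icc 0 t, |I s| ≤ Cg * t := by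
    intro s hs
    have h1 : ‖∫ r in (0:ℝ)..s, G1 r‖ ≤ Cg * |s - 0| := by
      apply intervalIntegral.norm_integral_le_of_norm_le_const
      intro r _
      rw [Real.norm_eq_abs]
      exact hG1bd r
    rw [Real.norm_eq_abs, sub_zero, abs_of_nonneg hs.1] at h1
    exact h1.trans (mul_le_mul_of_nonneg_left hs.2 hCg0)
  have hI0 : I 0 = 0 := intervalIntegral.integral_same
  -- rewrite the goal
  have hIeq : (∫ s in (0:ℝ)..t, g (X y s)) = I t := by
    apply intervalIntegral.integral_congr
    intro r hr
    rw [Set.uIcc_of_le ht0.le] at hr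
    rw [hG1def]
    simp only [hYeq r ⟨hr.1, hr.2.trans ht₂1.le⟩]
  rw [hIeq, ← hYt]
  -- it suffices to prove the inequality up to δ * (1 + t)
  have hsuff : ∀ δ : ℝ, 0 < δ → u y ≤ I t + u (Y t) + δ * (1 + t) := by
    intro δ hδ
    by_contra hcon'
    push_neg at hcon'
    have hcon : I t + u (Y t) + δ * (1 + t) < u y := hcon'
    clear hcon'
    -- tube around the curve
    have hΓcomp : IsCompact (Y '' Set.Icc 0 t) := (isCompact_Icc).image hYcont
    have hΓsub : Y '' Set.Icc 0 t ⊆ (closure Ω)ᶜ := by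
      rintro _ ⟨s, _, rfl⟩; exact hYout s
    obtain ⟨r, hr0, hrsub⟩ :=
      hΓcomp.exists_thickening_subset_open isClosed_closure.isOpen_compl hΓsub
    set r' : ℝ := r / 2 with hr'def
    have hr'0 : 0 < r' := by positivity
    set Γ : Set (EN N) := Y '' Set.Icc 0 t with hΓdef
    set K'' : Set (EN N) := cthickening r' Γ with hK''def
    have hK''comp : IsCompact K'' := hΓcomp.cthickening
    have hK''sub : K'' ⊆ (closure Ω)ᶜ := by
      refine (cthickening_subset_thickening' hr0 ?_ Γ).trans hrsub
      rw [hr'def]; linarith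
    have hΓK'' : Γ ⊆ K'' := self_subset_cthickening Γ
    have hK''ne : K''.Nonempty := ⟨Y 0, hΓK'' ⟨0, ⟨le_refl 0, ht0.le⟩, rfl⟩⟩
    -- a bound for u on K''
    obtain ⟨U, hU⟩ : ∃ U : ℝ, ∀ x ∈ K'', u x ≤ U := by
      choose C hC using hub
      obtain ⟨fs, _, hfscover⟩ := hK''comp.elim_nhds_subcover
        (fun x => {z | |u z| ≤ C x}) (fun x _ => hC x)
      rcases fs.eq_empty_or_nonempty with rfl | hfs
      · simp only [Finset.notMem_empty, Set.iUnion_of_empty, Set.iUnion_empty,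
          Set.subset_empty_iff] at hfscover
        rw [hfscover] at hK''ne
        exact absurd hK''ne (by simp)
      · refine ⟨fs.sup' hfs C, fun x hx => ?_⟩
        obtain ⟨i, hi, hxi⟩ := Set.mem_iUnion₂.1 (hfscover hx)
        exact le_trans (le_trans (le_abs_self _) hxi) (Finset.le_sup' C hi)
    -- the compact doubling domain
    set A : Set (EN N × ℝ) :=
      {p | p.2 ∈ Set.Icc 0 t ∧ ‖p.1 - Y p.2‖ ≤ r'} with hAdef
    have hAclosed : IsClosed A := by
      have : A = {p : EN N × ℝ | p.2 ∈ Set.Icc 0 t} ∩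
          {p : EN N × ℝ | ‖p.1 - Y p.2‖ ≤ r'} := rfl
      rw [this]
      exact (isClosed_Icc.preimage continuous_snd).inter
        (isClosed_le ((continuous_fst.sub (hYcont.comp continuous_snd)).norm) continuous_const)
    have hAsub : A ⊆ K'' ×ˢ Set.Icc 0 t := by
      rintro ⟨x, s⟩ ⟨hs, hxs⟩
      refine ⟨mem_cthickening_of_dist_le x (Y s) r' Γ ⟨s, hs, rfl⟩ ?_, hs⟩
      rw [dist_eq_norm]; exact hxs
    have hAcomp : IsCompact A :=
      (hK''comp.prod isCompact_Icc).of_isClosed_subset hAclosed hAsub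
    have hy0A : ((y, 0) : EN N × ℝ) ∈ A := by
      constructor
      · exact ⟨le_refl 0, ht0.le⟩
      · simp only [hY0, sub_self, norm_zero]
        exact hr'0.le
    -- the unpenalized functional and its max on the graph
    set W : EN N × ℝ → ℝ := fun p => u p.1 + (I p.2 + δ * p.2) with hWdef
    have hWusc : UpperSemicontinuous W :=
      (hu.comp continuous_fst).add
        (((hIcont.comp continuous_snd).add (continuous_const.mul continuous_snd)).upperSemicontinuous)
    set G : Set (EN N × ℝ) := (fun s => (Y s, s)) '' Set.Icc 0 t with hGdef
    have hGcomp : IsCompact G := isCompact_Icc.image ((hYcont).prodMk continuous_id)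
    have hGclosed : IsClosed G := hGcomp.isClosed
    have hGsub : G ⊆ A := by
      rintro _ ⟨s, hs, rfl⟩
      exact ⟨hs, by simp only [sub_self, norm_zero]; exact hr'0.le⟩
    have hGne : G.Nonempty := ⟨(Y 0, 0), ⟨0, ⟨le_refl 0, ht0.le⟩, rfl⟩⟩
    obtain ⟨p₀, hp₀G, hp₀max⟩ := usc_exists_max hGcomp hGne hWusc
    set M₀ : ℝ := W p₀ with hM₀def
    -- the small parameter η and the exceptional set E
    set η : ℝ := δ / (4 * (2 * K + 1)) with hηdef
    have hη0 : 0 < η := by rw [hηdef]; positivity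
    set E : Set (EN N × ℝ) := A ∩ {p | M₀ + η ≤ W p} with hEdef
    have hEcomp : IsCompact E :=
      hAcomp.of_isClosed_subset (hAclosed.inter (hWusc.isClosed_preimage (M₀ + η)))
        Set.inter_subset_left
    obtain ⟨ρ₃, hρ₃0, hρ₃⟩ : ∃ ρ₃ : ℝ, 0 < ρ₃ ∧ ∀ p ∈ E, ∀ q ∈ G, ρ₃ ≤ dist p q := by
      rcases E.eq_empty_or_nonempty with hE | hE
      · exact ⟨1, one_pos, by simp [hE]⟩
      · have hEG : ∀ p ∈ E, p ∉ G := by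
          intro p hpE hpG
          have h1 : W p ≤ M₀ := hp₀max p hpG
          have h2 : M₀ + η ≤ W p := hpE.2
          linarith
        obtain ⟨pm, hpmE, hpmmin⟩ :=
          hEcomp.exists_isMinOn hE ((continuous_infDist_pt G).continuousOn)
        have hpm0 : 0 < infDist pm G :=
          (hGclosed.notMem_iff_infDist_pos hGne).1 (hEG pm hpmE)
        refine ⟨infDist pm G, hpm0, fun p hp q hq => ?_⟩
        exact le_trans (hpmmin hp) (infDist_le_dist_of_mem hq)
    -- uniform continuity of g on K''
    obtain ⟨ρ₂, hρ₂0, hρ₂⟩ : ∃ ρ₂ : ℝ, 0 < ρ₂ ∧ ∀ a ∈ K'', ∀ b ∈ K'',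
        dist a b < ρ₂ → dist (g a) (g b) < δ / 4 := by
      have huc : UniformContinuousOn g K'' :=
        hK''comp.uniformContinuousOn_of_continuous (hgcont.mono hK''sub)
      rw [Metric.uniformContinuousOn_iff] at huc
      obtain ⟨ρ₂, hρ₂0, h⟩ := huc (δ / 4) (by positivity)
      exact ⟨ρ₂, hρ₂0, fun a ha b hb hd => h a ha b hb hd⟩
    -- upper semicontinuity of u at Y t
    obtain ⟨ρ₁, hρ₁0, hρ₁⟩ : ∃ ρ₁ : ℝ, 0 < ρ₁ ∧ ∀ z : EN N,
        dist z (Y t) < ρ₁ → u z < u (Y t) + δ := by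
      have h := hu (Y t) (u (Y t) + δ) (by linarith)
      rw [Metric.eventually_nhds_iff] at h
      obtain ⟨ρ₁, hρ₁0, h⟩ := h
      exact ⟨ρ₁, hρ₁0, fun z hz => h hz⟩
    -- choice of ε
    set B' : ℝ := max (U + Cg * t + δ * t - u y) 1 with hB'def
    have hB'0 : 0 < B' := lt_of_lt_of_le one_pos (le_max_right _ _)
    set m : ℝ := min (min r' ρ₁) (min ρ₂ ρ₃) with hmdef
    have hm0 : 0 < m := lt_min (lt_min hr'0 hρ₁0) (lt_min hρ₂0 hρ₃0)
    have hmr' : m ≤ r' := (min_le_left _ _).trans (min_le_left _ _)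
    have hmρ₁ : m ≤ ρ₁ := (min_le_left _ _).trans (min_le_right _ _)
    have hmρ₂ : m ≤ ρ₂ := (min_le_right _ _).trans (min_le_left _ _)
    have hmρ₃ : m ≤ ρ₃ := (min_le_right _ _).trans (min_le_right _ _)
    set ε : ℝ := m ^ 2 / (2 * B') with hεdef
    have hε0 : 0 < ε := by rw [hεdef]; positivity
    -- the penalized functional and its max
    set Φ : EN N × ℝ → ℝ :=
      fun p => u p.1 + (I p.2 + δ * p.2 + -ε⁻¹ * ‖p.1 - Y p.2‖ ^ 2) with hΦdef
    have hΦusc : UpperSemicontinuous Φ := by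
      apply (hu.comp continuous_fst).add
      apply Continuous.upperSemicontinuous
      exact ((hIcont.comp continuous_snd).add (continuous_const.mul continuous_snd)).add
        (continuous_const.mul
          (((continuous_fst.sub (hYcont.comp continuous_snd)).norm).pow 2))
    obtain ⟨⟨xb, sb⟩, hpbA, hpbmax⟩ := usc_exists_max hAcomp ⟨(y, 0), hy0A⟩ hΦusc
    have hpbA' : sb ∈ Set.Icc 0 t ∧ ‖xb - Y sb‖ ≤ r' := hpbA
    obtain ⟨hsb, hxbr⟩ := hpbA'
    -- basic facts about the max point
    have hΦy0 : Φ (y, 0) = u y := by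
      have e1 : Φ (y, 0) = u y + (I 0 + δ * 0 + -ε⁻¹ * ‖y - Y 0‖ ^ 2) := rfl
      rw [e1, hI0, hY0, sub_self, norm_zero]
      ring
    have hM1 : u y ≤ Φ (xb, sb) := by
      rw [← hΦy0]; exact hpbmax (y, 0) hy0A
    have hxbK'' : xb ∈ K'' := by
      apply mem_cthickening_of_dist_le xb (Y sb) r' Γ ⟨sb, hsb, rfl⟩
      rw [dist_eq_norm]; exact hxbr
    have hxbout : xb ∉ closure Ω := hK''sub hxbK''
    have hYsbK'' : Y sb ∈ K'' := hΓK'' ⟨sb, hsb, rfl⟩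
    set pen : ℝ := ε⁻¹ * ‖xb - Y sb‖ ^ 2 with hpendef
    have hpen0 : 0 ≤ pen := by positivity
    have hΦpb : Φ (xb, sb) = u xb + (I sb + δ * sb + -pen) := by
      have e1 : Φ (xb, sb) = u xb + (I sb + δ * sb + -ε⁻¹ * ‖xb - Y sb‖ ^ 2) := rfl
      rw [e1, hpendef]; ring
    have hpenB : pen ≤ B' := by
      have h1 : u xb ≤ U := hU xb hxbK''
      have h2 : |I sb| ≤ Cg * t := hIbd sb hsb
      have h3 : δ * sb ≤ δ * t := mul_le_mul_of_nonneg_left hsb.2 hδ.le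
      have h4 : u y ≤ u xb + (I sb + δ * sb + -pen) := by rw [← hΦpb]; exact hM1
      have h5 : u y + pen ≤ U + Cg * t + δ * t := by
        have h6 := abs_le.1 h2
        linarith only [h1, h3, h4, h6.2]
      calc pen ≤ U + Cg * t + δ * t - u y := by linarith only [h5]
        _ ≤ B' := le_max_left _ _
    have hdistm : ‖xb - Y sb‖ < m := by
      have h1 : ‖xb - Y sb‖ ^ 2 ≤ B' * ε := by
        have := hpenB
        rw [hpendef] at this
        calc ‖xb - Y sb‖ ^ 2 = ε * (ε⁻¹ * ‖xb - Y sb‖ ^ 2) := by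
              field_simp
          _ ≤ ε * B' := mul_le_mul_of_nonneg_left this hε0.le
          _ = B' * ε := by ring
      have h2 : B' * ε < m ^ 2 := by
        rw [hεdef]
        rw [mul_div_assoc']
        rw [div_lt_iff₀ (by positivity)]
        linarith only [mul_pos hB'0 (pow_pos hm0 2)]
      have h3 : ‖xb - Y sb‖ ^ 2 < m ^ 2 := lt_of_le_of_lt h1 h2
      exact lt_of_pow_lt_pow_left₀ 2 hm0.le h3
    -- the max point is not at the final time
    have hsbt : sb < t := by
      rcases lt_or_eq_of_le hsb.2 with h | h
      · exact h
      · exfalso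
        have h1 : u xb < u (Y t) + δ := by
          apply hρ₁
          rw [dist_eq_norm, ← h]
          exact lt_of_lt_of_le hdistm hmρ₁
        have h2 : u y ≤ u xb + (I sb + δ * sb + -pen) := by
          rw [← hΦpb]; exact hM1
        rw [h] at h2
        linarith only [hcon, h1, h2, hpen0]
    -- the penalization is small
    have hpenη : pen ≤ η := by
      have hpbE : ((xb, sb) : EN N × ℝ) ∉ E := by
        intro hpE
        have h1 := hρ₃ (xb, sb) hpE (Y sb, sb) ⟨sb, hsb, rfl⟩
        rw [Prod.dist_eq] at h1
        simp only [dist_self] at h1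
        have h2 : dist xb (Y sb) < ρ₃ := by
          rw [dist_eq_norm]
          exact lt_of_lt_of_le hdistm hmρ₃
        rw [max_eq_left dist_nonneg] at h1
        linarith
      have h1 : W (xb, sb) < M₀ + η := by
        by_contra h
        push_neg at h
        exact hpbE ⟨⟨hsb, hxbr⟩, h⟩
      have h2 : M₀ ≤ Φ (xb, sb) := by
        obtain ⟨s₀, hs₀, rfl⟩ := hp₀G
        have h3 : Φ (Y s₀, s₀) = W (Y s₀, s₀) := by
          have e1 : Φ (Y s₀, s₀) = u (Y s₀) + (I s₀ + δ * s₀ + -ε⁻¹ * ‖Y s₀ - Y s₀‖ ^ 2) := rfl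
          have e2 : W (Y s₀, s₀) = u (Y s₀) + (I s₀ + δ * s₀) := rfl
          rw [e1, e2, sub_self, norm_zero]
          ring
        rw [hM₀def, ← h3]
        exact hpbmax (Y s₀, s₀) (hGsub ⟨s₀, hs₀, rfl⟩)
      have h4 : Φ (xb, sb) = W (xb, sb) - pen := by
        have e2 : W (xb, sb) = u xb + (I sb + δ * sb) := rfl
        rw [hΦpb, e2]; ring
      linarith only [h1, h2, h4]
    -- the viscosity inequality at xb
    have hA1 : 2 * ε⁻¹ * ⟪xb - Y sb, γ xb⟫ ≤ g xb := by
      set φ : EN N → ℝ := fun z => ε⁻¹ * ‖z - Y sb‖ ^ 2 with hφdef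
      have hφC : ContDiff ℝ 2 φ := by
        apply ContDiff.mul contDiff_const
        exact (contDiff_id.sub contDiff_const).norm_sq ℝ
      have hg1 : HasGradientAt φ ((2 * ε⁻¹) • (xb - Y sb)) xb :=
        hasGradientAt_const_mul_norm_sq ε⁻¹ (Y sb) xb
      have hgrad : gradient φ xb = (2 * ε⁻¹) • (xb - Y sb) := hg1.gradient
      have hmax : IsLocalMax (fun z => u z - φ z) xb := by
        have hballmem : Metric.ball xb (r' - ‖xb - Y sb‖) ∈ 𝓝 xb :=
          Metric.ball_mem_nhds xb (by linarith [lt_of_lt_of_le hdistm hmr'])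
        filter_upwards [hballmem] with z hz
        have hzA : ((z, sb) : EN N × ℝ) ∈ A := by
          refine ⟨hsb, ?_⟩
          have h1 : dist z xb < r' - ‖xb - Y sb‖ := Metric.mem_ball.1 hz
          have h2 : ‖z - Y sb‖ ≤ ‖z - xb‖ + ‖xb - Y sb‖ := norm_sub_le_norm_sub_add_norm_sub _ _ _
          rw [dist_eq_norm] at h1
          linarith
        have h3 := hpbmax (z, sb) hzA
        have h4 : Φ (z, sb) = u z - φ z + (I sb + δ * sb) := by
          have e1 : Φ (z, sb) = u z + (I sb + δ * sb + -ε⁻¹ * ‖z - Y sb‖ ^ 2) := rfl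
          have e2 : φ z = ε⁻¹ * ‖z - Y sb‖ ^ 2 := rfl
          rw [e1, e2]; ring
        have h5 : Φ (xb, sb) = u xb - φ xb + (I sb + δ * sb) := by
          have e1 : Φ (xb, sb) = u xb + (I sb + δ * sb + -ε⁻¹ * ‖xb - Y sb‖ ^ 2) := rfl
          have e2 : φ xb = ε⁻¹ * ‖xb - Y sb‖ ^ 2 := rfl
          rw [e1, e2]; ring
        rw [h4, h5] at h3
        simpa using h3
      have h6 := hvisc φ hφC xb hxbout hmax
      rw [hgrad, real_inner_smul_left] at h6
      linarith only [h6]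
    -- derivative of the time-slice function at sb, from the right
    set ψ : ℝ → ℝ := fun s => I s + δ * s + -ε⁻¹ * ‖xb - Y s‖ ^ 2 with hψdef
    set ip : ℝ := ⟪xb - Y sb, γ (Y sb)⟫ with hipdef
    have hψderiv : HasDerivWithinAt ψ (G1 sb + δ + -ε⁻¹ * (2 * ip)) (Set.Ici sb) sb := by
      have hq : HasDerivWithinAt (fun s => xb - Y s) (γ (Y sb)) (Set.Ici sb) sb := by
        have := (hYderiv sb ⟨hsb.1, hsb.2⟩).const_sub xb
        simpa using this
      have hq2 : HasDerivWithinAt (fun s => ‖xb - Y s‖ ^ 2) (2 * ip) (Set.Ici sb) sb :=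
        hq.norm_sq
      have hq3 : HasDerivWithinAt (fun s => -ε⁻¹ * ‖xb - Y s‖ ^ 2)
          (-ε⁻¹ * (2 * ip)) (Set.Ici sb) sb := hq2.const_mul _
      have hq4 : HasDerivWithinAt (fun s => δ * s) δ (Set.Ici sb) sb := by
        simpa using (hasDerivWithinAt_id sb (Set.Ici sb)).const_mul δ
      have hq5 : HasDerivWithinAt I (G1 sb) (Set.Ici sb) sb :=
        (hIderiv sb).hasDerivWithinAt
      exact (hq5.add hq4).add hq3
    have hψmax : ∀ᶠ s in 𝓝[Set.Ici sb] sb, ψ s ≤ ψ sb := by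
      have hev1 : ∀ᶠ s in 𝓝 sb, s ≤ t := eventually_le_nhds hsbt
      have hev2 : ∀ᶠ s in 𝓝 sb, Y s ∈ Metric.ball (Y sb) (r' - ‖xb - Y sb‖) :=
        hYcont.continuousAt (Metric.ball_mem_nhds _
          (by linarith [lt_of_lt_of_le hdistm hmr'] : (0:ℝ) < r' - ‖xb - Y sb‖))
      filter_upwards [mem_nhdsWithin_of_mem_nhds hev1, mem_nhdsWithin_of_mem_nhds hev2,
        self_mem_nhdsWithin] with s hst hsY (hssb : s ∈ Set.Ici sb)
      have hs0 : 0 ≤ s := le_trans hsb.1 hssb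
      have hsA : ((xb, s) : EN N × ℝ) ∈ A := by
        refine ⟨⟨hs0, hst⟩, ?_⟩
        have h1 : ‖xb - Y s‖ ≤ ‖xb - Y sb‖ + ‖Y sb - Y s‖ := norm_sub_le_norm_sub_add_norm_sub _ _ _
        rw [Metric.mem_ball, dist_comm, dist_eq_norm] at hsY
        linarith
      have h2 := hpbmax (xb, s) hsA
      have h3 : Φ (xb, s) = u xb + ψ s := rfl
      have h4 : Φ (xb, sb) = u xb + ψ sb := rfl
      rw [h3, h4] at h2
      linarith only [h2]
    have hd0 : G1 sb + δ + -ε⁻¹ * (2 * ip) ≤ 0 :=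
      deriv_nonpos_of_right_max hψderiv hψmax
    -- one-sided Lipschitz estimate
    have hOSLxy := hOSL xb hxbout (Y sb) (hYout sb)
    have hcomm : ⟪γ xb - γ (Y sb), xb - Y sb⟫ = ⟪xb - Y sb, γ xb - γ (Y sb)⟫ :=
      real_inner_comm _ _
    have hsplit : ip = ⟪xb - Y sb, γ xb⟫ - ⟪xb - Y sb, γ xb - γ (Y sb)⟫ := by
      rw [hipdef, inner_sub_right]
      ring
    have hip_le : ip ≤ ⟪xb - Y sb, γ xb⟫ + K * ‖xb - Y sb‖ ^ 2 := by
      rw [hsplit]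
      have h1 : -(K * ‖xb - Y sb‖ ^ 2) ≤ ⟪xb - Y sb, γ xb - γ (Y sb)⟫ := by
        rw [← hcomm]; exact hOSLxy
      linarith
    -- g difference estimate
    have hgdiff : g xb - G1 sb ≤ δ / 4 := by
      have h1 : dist (g xb) (g (Y sb)) < δ / 4 := by
        apply hρ₂ xb hxbK'' (Y sb) hYsbK''
        rw [dist_eq_norm]
        exact lt_of_lt_of_le hdistm hmρ₂
      rw [Real.dist_eq] at h1
      have h2 := abs_lt.1 h1
      simp only [hG1def]
      linarith only [h2.2]
    -- K·pen estimate
    have hKpen : K * pen ≤ K * η := mul_le_mul_of_nonneg_left hpenη hK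
    have h2K : 2 * (K * η) ≤ δ / 4 := by
      have h1 : η * (4 * (2 * K + 1)) = δ := by
        rw [hηdef]; field_simp
      linarith only [h1, hη0.le]
    -- final contradiction
    have hmul : ε⁻¹ * (2 * ip) ≤ ε⁻¹ * (2 * (⟪xb - Y sb, γ xb⟫ + K * ‖xb - Y sb‖ ^ 2)) := by
      apply mul_le_mul_of_nonneg_left _ (by positivity : (0:ℝ) ≤ ε⁻¹)
      linarith only [hip_le]
    have hexpand : ε⁻¹ * (2 * (⟪xb - Y sb, γ xb⟫ + K * ‖xb - Y sb‖ ^ 2)) =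
        2 * ε⁻¹ * ⟪xb - Y sb, γ xb⟫ + 2 * (K * pen) := by
      rw [hpendef]; ring
    rw [hexpand] at hmul
    linarith only [hd0, hmul, hA1, hKpen, h2K, hgdiff, hδ]
  -- conclude
  apply le_of_forall_pos_le_add
  intro ε' hε'
  have hδ : 0 < ε' / (1 + t) := by positivity
  have := hsuff (ε' / (1 + t)) hδ
  have heq : ε' / (1 + t) * (1 + t) = ε' := by field_simp
  linarith only [this, heq]


set_option maxHeartbeats 1000000 in
/-- Transport inequality for subsolutions, up to and including the hitting time. -/
lemma transport_full
    {N : ℕ} {Ω : Set (EN N)}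
    {γ : EN N → EN N} {g : EN N → ℝ}
    (hgcont : ContinuousOn g (closure Ω)ᶜ)
    {Cg : ℝ} (hgbd : ∀ x ∈ (closure Ω)ᶜ, |g x| ≤ Cg)
    {K : ℝ} (hK : 0 ≤ K)
    (hOSL : ∀ x ∈ (closure Ω)ᶜ, ∀ y ∈ (closure Ω)ᶜ,
      -(K * ‖x - y‖ ^ 2) ≤ ⟪γ x - γ y, x - y⟫)
    {X : EN N → ℝ → EN N} {τ : EN N → ℝ}
    (hX0 : ∀ y, X y 0 = y)
    (hXstay : ∀ y ∉ closure Ω, ∀ t, 0 ≤ t → t < τ y → X y t ∉ closure Ω)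
    (hXode : ∀ y ∉ closure Ω, ∀ t, 0 ≤ t → t < τ y → HasDerivAt (X y) (-(γ (X y t))) t)
    (hXcont : ∀ y ∉ closure Ω, ContinuousOn (X y) (Set.Icc 0 (τ y)))
    {u : EN N → ℝ}
    (hub : ∀ x : EN N, ∃ C : ℝ, ∀ᶠ z in 𝓝 x, |u z| ≤ C)
    (hu : UpperSemicontinuous u)
    (hvisc : ∀ φ : EN N → ℝ, ContDiff ℝ 2 φ → ∀ x ∉ closure Ω,
        IsLocalMax (fun z => u z - φ z) x → ⟪gradient φ x, γ x⟫ ≤ g x)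
    (y : EN N) (hy : y ∉ closure Ω) (t : ℝ) (ht0 : 0 < t) (htτ : t ≤ τ y) :
    u y ≤ (∫ s in (0:ℝ)..t, g (X y s)) + u (X y t) := by
  rcases lt_or_eq_of_le htτ with hlt | heq
  · exact transport_core hgcont hgbd hK hOSL hX0 hXstay hXode hXcont hub hu hvisc y hy t ht0 hlt
  · have hCg0 : 0 ≤ Cg := le_trans (abs_nonneg _) (hgbd y hy)
    set F : ℝ → ℝ := fun s => g (X y s) with hFdef
    have hFcontOn : ContinuousOn F (Set.Ioo 0 t) := by
      apply ContinuousOn.comp hgcont ((hXcont y hy).mono ?_) ?_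
      · intro s hs; exact ⟨hs.1.le, hs.2.le.trans htτ⟩
      · intro s hs; exact hXstay y hy s hs.1.le (lt_of_lt_of_le hs.2 htτ)
    have hFint : IntervalIntegrable F volume 0 t := by
      rw [intervalIntegrable_iff, Set.uIoc_of_le ht0.le,
        integrableOn_Ioc_iff_integrableOn_Ioo]
      refine ⟨hFcontOn.aestronglyMeasurable measurableSet_Ioo, ?_⟩
      apply MeasureTheory.HasFiniteIntegral.restrict_of_bounded (C := Cg) measure_Ioo_lt_top
      refine (MeasureTheory.ae_restrict_iff' measurableSet_Ioo).2 (Filter.Eventually.of_forall ?_)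
      intro s hs
      rw [Real.norm_eq_abs]
      exact hgbd _ (hXstay y hy s hs.1.le (lt_of_lt_of_le hs.2 htτ))
    apply le_of_forall_pos_le_add
    intro ζ hζ
    obtain ⟨ρ, hρ0, hρ⟩ : ∃ ρ : ℝ, 0 < ρ ∧ ∀ z : EN N,
        dist z (X y t) < ρ → u z < u (X y t) + ζ / 2 := by
      have h := hu (X y t) (u (X y t) + ζ / 2) (by linarith)
      rw [Metric.eventually_nhds_iff] at h
      obtain ⟨ρ, hρ0, h⟩ := h
      exact ⟨ρ, hρ0, fun z hz => h hz⟩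
    have hcw : ContinuousWithinAt (X y) (Set.Icc 0 (τ y)) t := hXcont y hy t ⟨ht0.le, htτ⟩
    obtain ⟨σ, hσ0, hσ⟩ : ∃ σ : ℝ, 0 < σ ∧ ∀ s ∈ Set.Icc 0 (τ y),
        dist s t < σ → dist (X y s) (X y t) < ρ := by
      rw [Metric.continuousWithinAt_iff] at hcw
      obtain ⟨σ, hσ0, h⟩ := hcw ρ hρ0
      exact ⟨σ, hσ0, fun s hs hd => h hs hd⟩
    set β : ℝ := min σ (ζ / (2 * (Cg + 1))) with hβdef
    have hβ0 : 0 < β := lt_min hσ0 (by positivity)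
    set t' : ℝ := max (t / 2) (t - β / 2) with ht'def
    have ht'0 : 0 < t' := lt_of_lt_of_le (by positivity) (le_max_left _ _)
    have ht't : t' < t := max_lt (by linarith) (by linarith)
    have htt' : t - t' ≤ β / 2 := by
      have := le_max_right (t / 2) (t - β / 2)
      linarith
    have hcore := transport_core hgcont hgbd hK hOSL hX0 hXstay hXode hXcont hub hu hvisc
      y hy t' ht'0 (lt_of_lt_of_le ht't htτ)
    have hu' : u (X y t') < u (X y t) + ζ / 2 := by
      apply hρ
      apply hσ t' ⟨ht'0.le, ht't.le.trans htτ⟩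
      rw [Real.dist_eq, abs_of_nonpos (by linarith : t' - t ≤ 0), neg_sub]
      have hβσ : β ≤ σ := min_le_left _ _
      linarith
    have hint1 : IntervalIntegrable F volume 0 t' := hFint.mono_set (by
      rw [Set.uIcc_of_le ht'0.le, Set.uIcc_of_le ht0.le]
      exact Set.Icc_subset_Icc le_rfl ht't.le)
    have hint2 : IntervalIntegrable F volume t' t := hFint.mono_set (by
      rw [Set.uIcc_of_le ht't.le, Set.uIcc_of_le ht0.le]
      exact Set.Icc_subset_Icc ht'0.le le_rfl)
    have hsplit : (∫ s in (0:ℝ)..t', F s) + (∫ s in t'..t, F s) = ∫ s in (0:ℝ)..t, F s :=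
      intervalIntegral.integral_add_adjacent_intervals hint1 hint2
    have htail : |∫ s in t'..t, F s| ≤ ζ / 2 := by
      have h1 : (∫ s in t'..t, F s) = ∫ s in Set.Ioo t' t, F s := by
        rw [intervalIntegral.integral_of_le ht't.le, MeasureTheory.integral_Ioc_eq_integral_Ioo]
      rw [h1]
      have h2 : ‖∫ s in Set.Ioo t' t, F s‖ ≤ Cg * (volume (Set.Ioo t' t)).toReal := by
        apply MeasureTheory.norm_setIntegral_le_of_norm_le_const_ae' measure_Ioo_lt_top
        · refine Filter.Eventually.of_forall fun s hs => ?_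
          rw [Real.norm_eq_abs]
          exact hgbd _ (hXstay y hy s (le_trans ht'0.le hs.1.le)
            (lt_of_lt_of_le hs.2 htτ))
      rw [Real.volume_Ioo, ENNReal.toReal_ofReal (by linarith)] at h2
      rw [← Real.norm_eq_abs]
      have hβζ : β ≤ ζ / (2 * (Cg + 1)) := min_le_right _ _
      have h3 : Cg * (t - t') ≤ Cg * (β / 2) :=
        mul_le_mul_of_nonneg_left (by linarith) hCg0
      have h4 : Cg * (β / 2) ≤ Cg * (ζ / (2 * (Cg + 1)) / 2) :=
        mul_le_mul_of_nonneg_left (by linarith) hCg0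
      have h6 : Cg * (ζ / (2 * (Cg + 1)) / 2) ≤ ζ / 4 := by
        rw [div_div, ← mul_div_assoc,
          div_le_div_iff₀ (by positivity) (by norm_num : (0:ℝ) < 4)]
        nlinarith [hζ.le, hCg0]
      linarith only [h2, h3, h4, h6, hζ.le]
    have habs := abs_le.1 htail
    calc u y ≤ (∫ s in (0:ℝ)..t', F s) + u (X y t') := hcore
      _ = (∫ s in (0:ℝ)..t, F s) - (∫ s in t'..t, F s) + u (X y t') := by
          rw [← hsplit]; ring
      _ ≤ (∫ s in (0:ℝ)..t, F s) + u (X y t) + ζ := by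
          linarith only [hu'.le, habs.1, habs.2]

/-- Lemma 2.2.  Under (BC1') — `γ, g` bounded and continuous on
`(closure Ω)ᶜ` with the one-sided Lipschitz condition
`(γ(x) − γ(y))·(x − y) ≥ −K|x − y|²` — and (BC2), the transport inequalities of
Lemma 2.1 remain valid: (a) a locally bounded usc viscosity subsolution `u` of
`Du·γ ≤ g` in `(closure Ω)ᶜ` satisfies `u y ≤ ∫₀ᵗ g(X y s) ds + u (X y t)` and
(b) a locally bounded lsc viscosity supersolution `v` of `Dv·γ ≥ g` satisfies
`v y ≥ ∫₀ᵗ g(X y s) ds + v (X y t)`, for every `y ∉ closure Ω` and `0 < t ≤ τ y`.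
Here `X y` solves `Ẋ = −γ(X)`, `X y 0 = y`, remains in `(closure Ω)ᶜ` on
`[0, τ y)` and extends continuously to `t = τ y`. -/
theorem transport_onesided_Lipschitz
    {N : ℕ} (hN : 1 ≤ N)
    (Ω : Set (EN N)) (hΩ : IsOpen Ω)
    (γ : EN N → EN N) (g : EN N → ℝ)
    -- (BC1') : bounded, continuous and one-sided Lipschitz on `(closure Ω)ᶜ`
    (hγcont : ContinuousOn γ (closure Ω)ᶜ) (hgcont : ContinuousOn g (closure Ω)ᶜ)
    (Cγ Cg : ℝ) (hγbd : ∀ x ∈ (closure Ω)ᶜ, ‖γ x‖ ≤ Cγ) (hgbd : ∀ x ∈ (closure Ω)ᶜ, |g x| ≤ Cg)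
    (K : ℝ) (hK : 0 ≤ K)
    (hOSL : ∀ x ∈ (closure Ω)ᶜ, ∀ y ∈ (closure Ω)ᶜ,
      -(K * ‖x - y‖ ^ 2) ≤ ⟪γ x - γ y, x - y⟫)
    -- the flow of `-γ` up to the hitting time, and the hitting time itself
    (X : EN N → ℝ → EN N) (τ : EN N → ℝ)
    (hX0 : ∀ y, X y 0 = y)
    (hXstay : ∀ y ∉ closure Ω, ∀ t, 0 ≤ t → t < τ y → X y t ∉ closure Ω)
    (hXode : ∀ y ∉ closure Ω, ∀ t, 0 ≤ t → t < τ y → HasDerivAt (X y) (-(γ (X y t))) t)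
    (hXcont : ∀ y ∉ closure Ω, ContinuousOn (X y) (Set.Icc 0 (τ y)))
    (hτ : ∀ y ∉ closure Ω, τ y = sInf {t : ℝ | 0 < t ∧ X y t ∈ closure Ω})
    -- (BC2)
    (hBC2 : ∀ y ∉ closure Ω, {t : ℝ | 0 < t ∧ X y t ∈ closure Ω}.Nonempty) :
    -- (a) subsolution inequality
    (∀ u : EN N → ℝ,
      (∀ x : EN N, ∃ C : ℝ, ∀ᶠ y in 𝓝 x, |u y| ≤ C) →
      UpperSemicontinuous u →
      (∀ φ : EN N → ℝ, ContDiff ℝ 2 φ →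
        ∀ x ∉ closure Ω, IsLocalMax (fun z => u z - φ z) x →
          ⟪gradient φ x, γ x⟫ ≤ g x) →
      ∀ y ∉ closure Ω, ∀ t : ℝ, 0 < t → t ≤ τ y →
        u y ≤ (∫ s in (0:ℝ)..t, g (X y s)) + u (X y t)) ∧
    -- (b) supersolution inequality
    (∀ v : EN N → ℝ,
      (∀ x : EN N, ∃ C : ℝ, ∀ᶠ y in 𝓝 x, |v y| ≤ C) →
      LowerSemicontinuous v →
      (∀ φ : EN N → ℝ, ContDiff ℝ 2 φ →
        ∀ x ∉ closure Ω, IsLocalMin (fun z => v z - φ z) x →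
          g x ≤ ⟪gradient φ x, γ x⟫) →
      ∀ y ∉ closure Ω, ∀ t : ℝ, 0 < t → t ≤ τ y →
        (∫ s in (0:ℝ)..t, g (X y s)) + v (X y t) ≤ v y) := by
  constructor
  · intro u hub hu hvisc y hy t ht0 htτ
    exact transport_full hgcont hgbd hK hOSL hX0 hXstay hXode hXcont hub hu hvisc y hy t ht0 htτ
  · intro v hvb hv hvisc y hy t ht0 htτ
    have hgcont' : ContinuousOn (fun z => -g z) (closure Ω)ᶜ := hgcont.neg
    have hgbd' : ∀ x ∈ (closure Ω)ᶜ, |(fun z => -g z) x| ≤ Cg := fun x hx => by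
      simpa [abs_neg] using hgbd x hx
    have hub' : ∀ x : EN N, ∃ C : ℝ, ∀ᶠ z in 𝓝 x, |(fun z => -(v z)) z| ≤ C := by
      intro x
      obtain ⟨C, hC⟩ := hvb x
      refine ⟨C, ?_⟩
      filter_upwards [hC] with z hz
      simpa [abs_neg] using hz
    have hu' : UpperSemicontinuous (fun z => -(v z)) := hv.neg_usc
    have hvisc' : ∀ φ : EN N → ℝ, ContDiff ℝ 2 φ → ∀ x ∉ closure Ω,
        IsLocalMax (fun z => -(v z) - φ z) x → ⟪gradient φ x, γ x⟫ ≤ -(g x) := by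
      intro φ hφ x hx hmax
      have hmin : IsLocalMin (fun z => v z - (fun w : EN N => -φ w) z) x := by
        show ∀ᶠ z in 𝓝 x, v x - (fun w : EN N => -φ w) x ≤ v z - (fun w : EN N => -φ w) z
        have hmax' : ∀ᶠ z in 𝓝 x, -(v z) - φ z ≤ -(v x) - φ x := hmax
        filter_upwards [hmax'] with z hz
        simp only [neg_neg, sub_neg_eq_add]
        linarith
      have h := hvisc (fun w => -φ w) hφ.neg x hx hmin
      have hdiff : DifferentiableAt ℝ φ x :=
        (hφ.differentiable (by norm_num)).differentiableAt
      have hgradneg : gradient (fun w : EN N => -φ w) x = -gradient φ x := by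
        have h1 : HasGradientAt φ (gradient φ x) x := hdiff.hasGradientAt
        have h2 : HasGradientAt (fun w : EN N => -φ w) (-gradient φ x) x := by
          rw [hasGradientAt_iff_hasFDerivAt] at h1 ⊢
          have h3 := h1.neg
          refine h3.congr_fderiv ?_
          simp [map_neg]
        exact h2.gradient
      rw [hgradneg, inner_neg_left] at h
      linarith
    have hres := transport_full (g := fun z => -g z) hgcont' hgbd' hK hOSL hX0 hXstay hXode
      hXcont hub' hu' hvisc' y hy t ht0 htτ
    rw [intervalIntegral.integral_neg] at hres
    linarith
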